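/- arXiv:0912.4375 — 3 statements merged into one kernel-verified Lean document; each statement's English description precedes it below -/
import Mathlib

section
/- The center of S is exactly the set of elements with vanishing first coordinate: Z(S) = {(0, b) : b ∈ F₈}. In particular Z(S) is isomorphic to the additive group of F₈, hence elementary abelian of order 8. -/
/-- The field with 8 elements. -/
noncomputable abbrev F8 : Type := GaloisField 2 3

/-- A Sylow 2-subgroup of the Suzuki group `Sz(8)`: the underlying set is `F₈ × F₈`
with multiplication `(a, b) * (c, d) = (a + c, b + d + c * a ^ 4)`. -/
structure SylowSz8 where
  a : F8
  b : F8

namespace SylowSz8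

noncomputable instance : Mul SylowSz8 :=
  ⟨fun x y => ⟨x.a + y.a, x.b + y.b + y.a * x.a ^ 4⟩⟩

noncomputable instance : One SylowSz8 := ⟨⟨0, 0⟩⟩

noncomputable instance : Inv SylowSz8 := ⟨fun x => ⟨x.a, x.b + x.a ^ 5⟩⟩

@[simp] theorem mul_a (x y : SylowSz8) : (x * y).a = x.a + y.a := rfl
@[simp] theorem mul_b (x y : SylowSz8) : (x * y).b = x.b + y.b + y.a * x.a ^ 4 := rfl
@[simp] theorem one_a : (1 : SylowSz8).a = 0 := rfl
@[simp] theorem one_b : (1 : SylowSz8).b = 0 := rfl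
@[simp] theorem inv_a (x : SylowSz8) : x⁻¹.a = x.a := rfl
@[simp] theorem inv_b (x : SylowSz8) : x⁻¹.b = x.b + x.a ^ 5 := rfl

theorem ext' : ∀ {x y : SylowSz8}, x.a = y.a → x.b = y.b → x = y
  | ⟨_, _⟩, ⟨_, _⟩, rfl, rfl => rfl

noncomputable instance : Group SylowSz8 where
  mul_assoc x y z := by
    have frob : ∀ u v : F8, (u + v) ^ 4 = u ^ 4 + v ^ 4 := fun u v => by
      have := add_pow_char_pow (R := F8) (p := 2) (n := 2) u v
      simpa using this
    refine ext' ?_ ?_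
    · simp [add_assoc]
    · simp only [mul_b, mul_a, frob]
      ring
  one_mul x := by
    refine ext' ?_ ?_ <;> simp
  mul_one x := by
    refine ext' ?_ ?_ <;> simp
  inv_mul_cancel x := by
    have h2 : ∀ u : F8, u + u = 0 := fun u => CharTwo.add_self_eq_zero u
    refine ext' ?_ ?_
    · simp [h2]
    · simp only [mul_b, inv_a, inv_b, one_b]
      have : x.a * x.a ^ 4 = x.a ^ 5 := by ring
      rw [this]
      calc x.b + x.a ^ 5 + x.b + x.a ^ 5
          = (x.b + x.b) + (x.a ^ 5 + x.a ^ 5) := by ring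
        _ = 0 := by rw [h2, h2, add_zero]

end SylowSz8

lemma F8_card : Nat.card F8 = 8 := by
  have := GaloisField.card 2 3 (by norm_num)
  simp [F8, Nat.card_eq_fintype_card, this]

lemma exists_pow4_ne : ∃ t : F8, t ^ 4 ≠ t := by
  by_contra h
  push_neg at h
  have : Fintype F8 := Fintype.ofFinite F8
  have h4 : (Polynomial.X ^ 4 - Polynomial.X : Polynomial F8).natDegree = 4 := by
    compute_degree!
  have pne : (Polynomial.X ^ 4 - Polynomial.X : Polynomial F8) ≠ 0 := by
    intro hp; rw [hp] at h4; simp at h4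
  have hroots : ∀ t : F8, t ∈ (Polynomial.X ^ 4 - Polynomial.X : Polynomial F8).roots := by
    intro t
    rw [Polynomial.mem_roots pne]
    simp [Polynomial.IsRoot, sub_eq_zero, h t]
  have hle := (Polynomial.X ^ 4 - Polynomial.X : Polynomial F8).card_roots'
  rw [h4] at hle
  have hcard : (Finset.univ : Finset F8).card ≤ Multiset.card (Polynomial.X ^ 4 - Polynomial.X : Polynomial F8).roots := by
    have hsub : (Finset.univ : Finset F8).val ≤ (Polynomial.X ^ 4 - Polynomial.X : Polynomial F8).roots := by
      apply Finset.val_le_iff_val_subset.mpr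
      intro t _; exact hroots t
    simpa using Multiset.card_le_card hsub
  have h8 : (Finset.univ : Finset F8).card = 8 := by
    rw [Finset.card_univ, ← Nat.card_eq_fintype_card]
    exact F8_card
  omega

lemma mem_center_iff' (x : SylowSz8) : x ∈ Subgroup.center SylowSz8 ↔ x.a = 0 := by
  rw [Subgroup.mem_center_iff]
  constructor
  · intro h
    obtain ⟨t, ht⟩ := exists_pow4_ne
    have h2 : ∀ u v : F8, u + v = 0 ↔ u = v := fun u v => by
      constructor
      · intro h; have := CharTwo.add_self_eq_zero v
        calc u = u + (v + v) := by rw [CharTwo.add_self_eq_zero]; ring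
          _ = (u + v) + v := by ring
          _ = v := by rw [h, zero_add]
      · rintro rfl; exact CharTwo.add_self_eq_zero u
    have key : ∀ g : SylowSz8, x.a * g.a ^ 4 = g.a * x.a ^ 4 := by
      intro g
      have := congrArg SylowSz8.b (h g)
      simp only [SylowSz8.mul_b] at this
      have hsub : x.a * g.a ^ 4 - g.a * x.a ^ 4 = 0 := by
        linear_combination this
      rw [CharTwo.sub_eq_add] at hsub
      exact (h2 _ _).mp hsub
    have h1 := key ⟨1, 0⟩
    simp only [one_pow, mul_one, one_mul] at h1
    have h2' := key ⟨t, 0⟩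
    rw [← h1] at h2'
    have : x.a * (t ^ 4 + t) = 0 := by
      have hx : x.a * t ^ 4 - t * x.a = 0 := by linear_combination h2'
      rw [CharTwo.sub_eq_add] at hx
      linear_combination hx
    rcases mul_eq_zero.mp this with h | h
    · exact h
    · exact absurd ((h2 _ _).mp h) ht
  · intro ha g
    refine SylowSz8.ext' ?_ ?_
    · simp [add_comm]
    · simp [ha]
      ring

/-- The center of `S` is exactly `{(0, b) : b ∈ F₈}`; in particular it is isomorphic to the
additive group of `F₈`, hence elementary abelian of order 8. -/
theorem center_SylowSz8 :
    (∀ x : SylowSz8, x ∈ Subgroup.center SylowSz8 ↔ x.a = 0) ∧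
    Nonempty (Subgroup.center SylowSz8 ≃* Multiplicative F8) ∧
    Nat.card (Subgroup.center SylowSz8) = 8 ∧
    (∀ x ∈ Subgroup.center SylowSz8, x * x = 1) := by
  have e : Subgroup.center SylowSz8 ≃* Multiplicative F8 :=
    { toFun := fun z => Multiplicative.ofAdd z.val.b
      invFun := fun t => ⟨⟨0, t.toAdd⟩, (mem_center_iff' _).mpr rfl⟩
      left_inv := fun z => by
        apply Subtype.ext
        refine SylowSz8.ext' ?_ rfl
        exact ((mem_center_iff' _).mp z.2).symm
      right_inv := fun t => rfl
      map_mul' := fun z w => by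
        have hz := (mem_center_iff' z.val).mp z.2
        show Multiplicative.ofAdd ((z.val * w.val).b) = _
        simp [hz, ofAdd_add] }
  refine ⟨mem_center_iff', ⟨e⟩, ?_, ?_⟩
  · rw [Nat.card_congr e.toEquiv, ← F8_card]
    rfl
  · intro x hx
    have ha := (mem_center_iff' x).mp hx
    refine SylowSz8.ext' ?_ ?_
    · simp [ha]
    · simp [ha, CharTwo.add_self_eq_zero]
end

section
/- The commutator (derived) subgroup of S equals the center of S: S′ = Z(S) = {(0, b) : b ∈ F₈}. -/

noncomputable instance : Fintype F8 := Fintype.ofFinite F8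

theorem F8.card8 : Fintype.card F8 = 8 := by simpa using GaloisField.card 2 3 (by norm_num)

theorem F8.pow8 (x : F8) : x ^ 8 = x := by
  have h := FiniteField.pow_card x; rwa [F8.card8] at h

theorem F8.exists_ne_zero_one : ∃ g : F8, g ≠ 0 ∧ g ≠ 1 := by
  classical
  by_contra h
  push_neg at h
  have hsub : (Finset.univ : Finset F8) ⊆ {0, 1} := by
    intro g _
    rcases eq_or_ne g 0 with h0 | h0
    · simp [h0]
    · simp [h g h0]
  have := Finset.card_le_card hsub
  rw [Finset.card_univ, F8.card8] at this
  have h2 : ({0, 1} : Finset F8).card ≤ 2 := Finset.card_insert_le _ _ |>.trans (by simp)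
  omega

theorem F8.exists_u : ∃ g : F8, g ≠ 0 ∧ g ^ 4 + g ≠ 0 := by
  obtain ⟨g, hg0, hg1⟩ := F8.exists_ne_zero_one
  refine ⟨g, hg0, fun h => hg1 ?_⟩
  have h4 : g ^ 4 = g := by
    have h2 : (2 : F8) = 0 := CharTwo.two_eq_zero
    linear_combination h - h2 * g
  have h3 : g ^ 3 = 1 := by
    have : g * g ^ 3 = g * 1 := by ring_nf; linear_combination h4
    exact mul_left_cancel₀ hg0 this
  have h7 : g ^ 7 = 1 := by
    have := FiniteField.pow_card_sub_one_eq_one g hg0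
    rwa [F8.card8] at this
  have : (1 : F8) = g := by
    rw [← h7]
    calc g ^ 7 = (g ^ 3) ^ 2 * g := by ring
      _ = g := by rw [h3]; ring
  exact this.symm

/-- Surjectivity of the bilinear form `(p, q) ↦ q p⁴ + p q⁴`. -/
theorem F8.form_surj (t : F8) : ∃ p q : F8, q * p ^ 4 + p * q ^ 4 = t := by
  obtain ⟨g, hg0, hu⟩ := F8.exists_u
  set u := g ^ 4 + g with hu_def
  set μ := t * u⁻¹ with hμ
  set l := μ ^ 3 with hl
  refine ⟨l * g, l, ?_⟩
  have hl5 : l ^ 5 = μ := by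
    rw [hl]
    have : (μ ^ 3) ^ 5 = μ ^ 8 * μ ^ 7 := by ring
    rw [this, F8.pow8]
    calc μ * μ ^ 7 = μ ^ 8 := by ring
      _ = μ := F8.pow8 μ
  have : l * (l * g) ^ 4 + l * g * l ^ 4 = l ^ 5 * (g ^ 4 + g) := by ring
  rw [this, hl5, hμ, ← hu_def]
  field_simp

/-- Nondegeneracy of the form. -/
theorem F8.form_nondeg {a : F8} (ha : a ≠ 0) : ∃ c : F8, c * a ^ 4 + a * c ^ 4 ≠ 0 := by
  obtain ⟨g, hg0, hu⟩ := F8.exists_u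
  refine ⟨a * g, ?_⟩
  have : a * g * a ^ 4 + a * (a * g) ^ 4 = a ^ 5 * (g ^ 4 + g) := by ring
  rw [this]
  exact mul_ne_zero (pow_ne_zero 5 ha) hu

open scoped commutatorElement

theorem SylowSz8.comm_a (x y : SylowSz8) : ⁅x, y⁆.a = 0 := by
  have h2 : ∀ u : F8, u + u = 0 := fun u => CharTwo.add_self_eq_zero u
  simp only [commutatorElement_def, SylowSz8.mul_a, SylowSz8.inv_a]
  calc x.a + y.a + x.a + y.a = (x.a + x.a) + (y.a + y.a) := by ring
    _ = 0 := by rw [h2, h2, add_zero]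

theorem SylowSz8.comm_b (x y : SylowSz8) :
    ⁅x, y⁆.b = y.a * x.a ^ 4 + x.a * y.a ^ 4 := by
  have frob : ∀ u v : F8, (u + v) ^ 4 = u ^ 4 + v ^ 4 := fun u v => by
    have := add_pow_char_pow (R := F8) (p := 2) (n := 2) u v
    simpa using this
  have h2 : (2 : F8) = 0 := CharTwo.two_eq_zero
  simp only [commutatorElement_def, SylowSz8.mul_b, SylowSz8.mul_a, SylowSz8.inv_a,
    SylowSz8.inv_b, frob]
  ring_nf
  linear_combination (x.b + y.b + y.a * x.a ^ 4 + y.a ^ 5 + x.a ^ 5) * h2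

/-- The subgroup `{(0, b)}` of `S`. -/
noncomputable def SylowSz8.N : Subgroup SylowSz8 where
  carrier := {x | x.a = 0}
  mul_mem' := by
    intro x y hx hy
    show (x * y).a = 0
    rw [SylowSz8.mul_a, hx, hy, add_zero]
  one_mem' := rfl
  inv_mem' := by
    intro x hx
    show x⁻¹.a = 0
    rw [SylowSz8.inv_a]; exact hx


/-- The commutator subgroup of `S` equals its center, namely `{(0, b) : b ∈ F₈}`. -/
theorem commutator_SylowSz8_eq_center :
    commutator SylowSz8 = Subgroup.center SylowSz8 ∧
    (∀ x : SylowSz8, x ∈ commutator SylowSz8 ↔ x.a = 0) := by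
  have hmem : ∀ x : SylowSz8, x ∈ commutator SylowSz8 ↔ x.a = 0 := by
    intro x
    constructor
    · intro hx
      have hle : commutator SylowSz8 ≤ SylowSz8.N := by
        rw [commutator_eq_closure]
        refine (Subgroup.closure_le _).2 ?_
        rintro z ⟨p, q, rfl⟩
        exact SylowSz8.comm_a p q
      exact hle hx
    · intro hx
      obtain ⟨p, q, hpq⟩ := F8.form_surj x.b
      have hx' : x = ⁅(⟨p, 0⟩ : SylowSz8), (⟨q, 0⟩ : SylowSz8)⁆ := by
        refine SylowSz8.ext' ?_ ?_
        · rw [SylowSz8.comm_a, hx]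
        · rw [SylowSz8.comm_b]; exact hpq.symm
      rw [hx', commutator_def]
      exact Subgroup.commutator_mem_commutator (Subgroup.mem_top _) (Subgroup.mem_top _)
  have hcenter : ∀ x : SylowSz8, x ∈ Subgroup.center SylowSz8 ↔ x.a = 0 := by
    intro x
    rw [Subgroup.mem_center_iff]
    constructor
    · intro hc
      by_contra ha
      obtain ⟨c, hcne⟩ := F8.form_nondeg ha
      have h := hc ⟨c, 0⟩
      have hb := congrArg SylowSz8.b h
      simp only [SylowSz8.mul_b] at hb
      apply hcne
      have heq : x.a * c ^ 4 = c * x.a ^ 4 := by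
        have := hb
        show x.a * (⟨c, 0⟩ : SylowSz8).a ^ 4 = (⟨c, 0⟩ : SylowSz8).a * x.a ^ 4
        linear_combination this
      rw [heq]
      exact CharTwo.add_self_eq_zero _
    · intro hx g
      refine SylowSz8.ext' ?_ ?_
      · simp [add_comm]
      · simp only [SylowSz8.mul_b]
        rw [hx]
        ring
  exact ⟨Subgroup.ext fun x => (hmem x).trans (hcenter x).symm, hmem⟩
end

section
/- Every element of S satisfies x⁴ = 1, and for x ∈ S one has x² = 1 if and only if x lies in the center Z(S) = {(0, b) : b ∈ F₈}. Consequently Ω₁(S), the subgroup generated by the elements of order at most 2, equals Z(S), and every element of S outside the center has order exactly 4. -/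
/-- Every element of `S` satisfies `x⁴ = 1`; an element squares to the identity iff it lies
in the center `Z(S) = {(0, b) : b ∈ F₈}`; consequently `Ω₁(S) = Z(S)` and every
non-central element has order exactly 4. -/
theorem exponent_structure_SylowSz8 :
    (∀ x : SylowSz8, x ^ 4 = 1) ∧
    (∀ x : SylowSz8, x ^ 2 = 1 ↔ x ∈ Subgroup.center SylowSz8) ∧
    (∀ x : SylowSz8, x ∈ Subgroup.center SylowSz8 ↔ x.a = 0) ∧
    Subgroup.closure {x : SylowSz8 | x ^ 2 = 1} = Subgroup.center SylowSz8 ∧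
    (∀ x : SylowSz8, x ∉ Subgroup.center SylowSz8 → orderOf x = 4) := by
  classical
  haveI : Fintype F8 := Fintype.ofFinite F8
  have h2 : ∀ u : F8, u + u = 0 := fun u => CharTwo.add_self_eq_zero u
  have card8 : Fintype.card F8 = 8 := by
    have := GaloisField.card 2 3 (by norm_num)
    simpa using this
  have pow8 : ∀ u : F8, u ^ 8 = u := fun u => by
    have := FiniteField.pow_card u
    rwa [card8] at this
  have sq : ∀ x : SylowSz8, x ^ 2 = (⟨0, x.a ^ 5⟩ : SylowSz8) := by
    intro x
    rw [pow_two]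
    refine SylowSz8.ext' ?_ ?_
    · simpa using h2 x.a
    · simp only [SylowSz8.mul_b]
      calc x.b + x.b + x.a * x.a ^ 4 = (x.b + x.b) + x.a ^ 5 := by ring
        _ = x.a ^ 5 := by rw [h2]; exact zero_add _
  have hpow4 : ∀ x : SylowSz8, x ^ 4 = 1 := by
    intro x
    rw [show (4:ℕ) = 2*2 from rfl, pow_mul, sq, sq]
    refine SylowSz8.ext' rfl ?_
    simp [h2]
  have hsq_iff_a : ∀ x : SylowSz8, x ^ 2 = 1 ↔ x.a = 0 := by
    intro x
    rw [sq]
    constructor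
    · intro h
      have hb : x.a ^ 5 = 0 := congrArg SylowSz8.b h
      exact pow_eq_zero_iff (by norm_num) |>.mp hb
    · intro h
      refine SylowSz8.ext' rfl ?_
      simp [h]
  have hcenter : ∀ x : SylowSz8, x ∈ Subgroup.center SylowSz8 ↔ x.a = 0 := by
    intro x
    rw [Subgroup.mem_center_iff]
    constructor
    · intro h
      by_contra ha
      have key : ∀ c : F8, x.a * c ^ 4 = c * x.a ^ 4 := by
        intro c
        have := congrArg SylowSz8.b (h ⟨c, 0⟩)
        simp only [SylowSz8.mul_b] at this
        simpa using this
      have key2 : ∀ c : F8, x.a ^ 2 * c = c ^ 2 * x.a := by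
        intro c
        have := congrArg (· ^ 2) (key c)
        simp only [mul_pow, ← pow_mul] at this
        have h8 : x.a ^ 2 * c ^ 8 = c ^ 2 * x.a ^ 8 := this
        rwa [pow8, pow8] at h8
      have key3 : ∀ c : F8, c = 0 ∨ c = x.a := by
        intro c
        have := key2 c
        have hf : x.a * (c * (x.a + c)) = 0 := by
          have : x.a ^ 2 * c + c ^ 2 * x.a = 0 := by rw [this]; exact h2 _
          calc x.a * (c * (x.a + c)) = x.a ^ 2 * c + c ^ 2 * x.a := by ring
            _ = 0 := this
        rcases mul_eq_zero.mp hf with h | h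
        · exact absurd h ha
        rcases mul_eq_zero.mp h with h | h
        · exact Or.inl h
        · right
          have : c = -x.a := by linear_combination h
          simpa [neg_eq_iff_add_eq_zero, h2] using (CharTwo.neg_eq x.a) ▸ this
      have hsub : (Finset.univ : Finset F8) ⊆ {0, x.a} := by
        intro c _
        rcases key3 c with h | h <;> simp [h]
      have := Finset.card_le_card hsub
      have hc2 : ({0, x.a} : Finset F8).card ≤ 2 := Finset.card_insert_le _ _ |>.trans (by simp)
      rw [Finset.card_univ, card8] at this
      omega
    · intro h g
      refine SylowSz8.ext' (add_comm _ _) ?_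
      simp only [SylowSz8.mul_b, h]
      ring
  refine ⟨hpow4, fun x => (hsq_iff_a x).trans (hcenter x).symm, hcenter, ?_, ?_⟩
  · have hset : {x : SylowSz8 | x ^ 2 = 1} = (Subgroup.center SylowSz8 : Set SylowSz8) := by
      ext x
      exact (hsq_iff_a x).trans (hcenter x).symm
    rw [hset, Subgroup.closure_eq]
  · intro x hx
    have h2x : ¬ x ^ 2 = 1 := fun h => hx ((hcenter x).mpr ((hsq_iff_a x).mp h))
    haveI : Fact (Nat.Prime 2) := ⟨Nat.prime_two⟩
    have := orderOf_eq_prime_pow (p := 2) (n := 1) (x := x)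
      (by simpa using h2x) (by simpa using hpow4 x)
    simpa using this
end
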